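/- Let ρ be any ranking function defined on all nonempty subsets of a set X of N objects. Then there exist preference functions U_k : X × X^k → ℝ for 0 ≤ k ≤ N−1 such that for every nonempty subset C ⊆ X, sorting the elements x ∈ C in decreasing order of U(x, C∖{x}) = Σ_k (average of U_k(x, C') over subsets C' ⊆ C∖{x} of size k) reproduces exactly the ranking ρ(C). That is, the FETA decomposition of order N−1 can represent every ranking function on N objects. -/

import Mathlib

open Finset

/-- Auxiliary recursion: `fetaUkAux S k x D` is zero unless `D.card = k` and `x ∉ D`,
and otherwise is chosen so that the FETA averages telescope to `S x (insert x D)`. -/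
noncomputable def fetaUkAux {X : Type*} [DecidableEq X] (S : X → Finset X → ℝ) :
    ℕ → X → Finset X → ℝ
  | k => fun x D =>
    if D.card = k ∧ x ∉ D then
      S x (insert x D) - ∑ j ∈ (Finset.range k).attach,
        (1 / (Nat.choose k j.1 : ℝ)) *
          ∑ C' ∈ Finset.powersetCard j.1 D, fetaUkAux S j.1 x C'
    else 0
decreasing_by exact Finset.mem_range.mp j.2

lemma fetaUkAux_total {X : Type*} [DecidableEq X] (S : X → Finset X → ℝ)
    (N : ℕ) (x : X) (D : Finset X) (hx : x ∉ D) (hD : D.card < N) :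
    (∑ k ∈ Finset.range N, (1 / (Nat.choose D.card k : ℝ)) *
        ∑ C' ∈ Finset.powersetCard k D, fetaUkAux S k x C')
      = S x (insert x D) := by
  set m := D.card with hm
  have hsub : Finset.range (m + 1) ⊆ Finset.range N := by
    intro k hk
    simp only [Finset.mem_range] at hk ⊢
    omega
  rw [← Finset.sum_subset hsub]
  · rw [Finset.sum_range_succ]
    have hself : Finset.powersetCard m D = {D} := by
      rw [hm, Finset.powersetCard_self]
    rw [hself, Finset.sum_singleton, Nat.choose_self]
    have hunf : fetaUkAux S m x D =
        S x (insert x D) - ∑ j ∈ (Finset.range m).attach,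
          (1 / (Nat.choose m j.1 : ℝ)) *
            ∑ C' ∈ Finset.powersetCard j.1 D, fetaUkAux S j.1 x C' := by
      rw [fetaUkAux]
      simp [hm, hx]
    rw [hunf, Finset.sum_attach (Finset.range m)
      (fun j => (1 / (Nat.choose m j : ℝ)) *
        ∑ C' ∈ Finset.powersetCard j D, fetaUkAux S j x C')]
    push_cast
    ring
  · intro k _ hk
    have hkm : m < k := by
      simp only [Finset.mem_range, not_lt] at hk
      omega
    have : Finset.powersetCard k D = ∅ := by
      rw [Finset.powersetCard_eq_empty]
      omega
    simp [this]


/-- Proposition 1: every ranking function `prec` on the nonempty subsets of an `N`-element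
set can be represented by a FETA decomposition of order `N - 1`: there are context
predicates `Uk k : X → Finset X → ℝ` (contexts of size `k`, symmetric since they are
functions of sets) such that sorting each query `C` by
`U(x, C∖{x}) = ∑_{k<N} (1/C(|C|−1,k)) ∑_{C' ⊆ C∖{x}, |C'|=k} Uk k x C'` reproduces `prec C`. -/
theorem feta_order_N_minus_one_universal {X : Type*} [Fintype X] [DecidableEq X]
    (N : ℕ) (hN : Fintype.card X = N)
    (prec : Finset X → X → X → Prop)
    (hirr : ∀ (C : Finset X) (x : X), x ∈ C → ¬ prec C x x)
    (htrans : ∀ (C : Finset X) (x y z : X), x ∈ C → y ∈ C → z ∈ C →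
      prec C x y → prec C y z → prec C x z)
    (htotal : ∀ (C : Finset X) (x y : X), x ∈ C → y ∈ C → x ≠ y →
      prec C x y ∨ prec C y x) :
    ∃ Uk : ℕ → X → Finset X → ℝ,
      ∀ (C : Finset X) (x y : X), x ∈ C → y ∈ C → x ≠ y →
        (prec C x y ↔
          (∑ k ∈ Finset.range N, (1 / (Nat.choose (C.card - 1) k : ℝ)) *
              ∑ D ∈ Finset.powersetCard k (C.erase x), Uk k x D) >
          (∑ k ∈ Finset.range N, (1 / (Nat.choose (C.card - 1) k : ℝ)) *
              ∑ D ∈ Finset.powersetCard k (C.erase y), Uk k y D)) := by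
  classical
  -- Score of x in context A: number of elements ranked below x.
  set S : X → Finset X → ℝ := fun x A => ((A.filter (fun y => prec A x y)).card : ℝ) with hS
  refine ⟨fetaUkAux S, ?_⟩
  intro C x y hxC hyC hxy
  have hcardN : C.card ≤ N := hN ▸ Finset.card_le_univ C
  have hpos : 0 < C.card := Finset.card_pos.mpr ⟨x, hxC⟩
  have total : ∀ z : X, z ∈ C →
      (∑ k ∈ Finset.range N, (1 / (Nat.choose (C.card - 1) k : ℝ)) *
          ∑ D ∈ Finset.powersetCard k (C.erase z), fetaUkAux S k z D) = S z C := by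
    intro z hz
    have hc : (C.erase z).card = C.card - 1 := Finset.card_erase_of_mem hz
    have h1 : insert z (C.erase z) = C := Finset.insert_erase hz
    have := fetaUkAux_total S N z (C.erase z) (Finset.notMem_erase z C)
      (by omega)
    rw [hc, h1] at this
    exact this
  rw [total x hxC, total y hyC]
  -- Now reduce to comparing scores.
  have key : ∀ a b : X, a ∈ C → b ∈ C → prec C a b → (S b C : ℝ) < S a C := by
    intro a b haC hbC h
    have hss : C.filter (fun z => prec C b z) ⊂ C.filter (fun z => prec C a z) := by
      constructor
      · intro z hzmem
        simp only [Finset.mem_filter] at hzmem ⊢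
        exact ⟨hzmem.1, htrans C a b z haC hbC hzmem.1 h hzmem.2⟩
      · intro hsub
        have hb : b ∈ C.filter (fun z => prec C a z) := by
          simp only [Finset.mem_filter]; exact ⟨hbC, h⟩
        have := hsub hb
        simp only [Finset.mem_filter] at this
        exact hirr C b hbC this.2
    have := Finset.card_lt_card hss
    simp only [hS]
    exact_mod_cast this
  constructor
  · exact key x y hxC hyC
  · intro hlt
    by_contra hnp
    rcases htotal C x y hxC hyC hxy with h | h
    · exact hnp h
    · exact lt_asymm hlt (key y x hyC hxC h)
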